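/- Under Assumptions A, suppose u, w ∈ B(y, R). Then the averaged operator A = ∫₀¹ F'(u + s(w − u)) ds is boundedly invertible, with inverse of norm at most m/(1−q); in particular F(w) − F(u) = A(w − u). -/

import Mathlib

open Metric Set Filter

theorem stmt_15
    {H : Type*} [NormedAddCommGroup H] [InnerProductSpace ℝ H] [CompleteSpace H]
    (F : H → H) (F' : H → H →L[ℝ] H) (y f : H) (R m q : ℝ)
    (hf : F y = f) (hR : 0 < R)
    (hdiff : ∀ u ∈ closedBall y R, HasFDerivAt F (F' u) u)
    (Q : H →L[ℝ] H)
    (hQl : Q.comp (F' y) = ContinuousLinearMap.id ℝ H)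
    (hQr : (F' y).comp Q = ContinuousLinearMap.id ℝ H)
    (hm : 0 < m) (hQm : ‖Q‖ ≤ m)
    (ω : ℝ → ℝ)
    (hωcont : ContinuousOn ω (Icc 0 (2 * R)))
    (hωmono : StrictMonoOn ω (Icc 0 (2 * R)))
    (hω0 : ω 0 = 0)
    (hωF : ∀ u ∈ closedBall y R, ∀ v ∈ closedBall y R, ‖F' u - F' v‖ ≤ ω ‖u - v‖)
    (hq : m * ω R = q) (hq0 : 0 < q) (hq1 : q < 1)
    (hF'cont : ContinuousOn F' (closedBall y R))
    (u w : H) (hu : u ∈ closedBall y R) (hw : w ∈ closedBall y R)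
    (A : H →L[ℝ] H) (hA : A = ∫ s in (0:ℝ)..1, F' (u + s • (w - u))) :
    ∃ B : H →L[ℝ] H, B.comp A = ContinuousLinearMap.id ℝ H ∧
      A.comp B = ContinuousLinearMap.id ℝ H ∧ ‖B‖ ≤ m / (1 - q) ∧
      F w - F u = A (w - u) := by
  set g : ℝ → H := fun s => u + s • (w - u) with hg
  have hgmem : ∀ s ∈ Icc (0:ℝ) 1, g s ∈ closedBall y R := by
    intro s hs
    have h := (convex_closedBall y R) hu hw (by linarith [hs.2] : (0:ℝ) ≤ 1 - s)
      hs.1 (by ring)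
    have : g s = (1 - s) • u + s • w := by simp [hg]; module
    rw [this]; exact h
  have hgcont : Continuous g := by
    exact continuous_const.add (continuous_id.smul continuous_const)
  have hcontF' : ContinuousOn (fun s => F' (g s)) (Icc (0:ℝ) 1) :=
    hF'cont.comp hgcont.continuousOn hgmem
  have hInt : IntervalIntegrable (fun s => F' (g s)) MeasureTheory.volume 0 1 := by
    apply ContinuousOn.intervalIntegrable
    rwa [uIcc_of_le zero_le_one]
  -- membership of uIoc points
  have hIoc : ∀ s ∈ Set.uIoc (0:ℝ) 1, s ∈ Icc (0:ℝ) 1 := by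
    intro s hs
    rw [uIoc_of_le zero_le_one] at hs
    exact ⟨hs.1.le, hs.2⟩
  have hωR0 : 0 ≤ ω R := by
    have : ω 0 < ω R := hωmono ⟨le_refl 0, by linarith⟩ ⟨hR.le, by linarith⟩ hR
    linarith [hω0 ▸ this]
  -- bound ‖A - F' y‖ ≤ ω R
  have hbound : ‖A - F' y‖ ≤ ω R := by
    have hConst : IntervalIntegrable (fun _ : ℝ => F' y) MeasureTheory.volume 0 1 :=
      intervalIntegrable_const
    have hsub : A - F' y = ∫ s in (0:ℝ)..1, (F' (g s) - F' y) := by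
      rw [intervalIntegral.integral_sub hInt hConst, hA,
        intervalIntegral.integral_const]
      simp; rfl
    rw [hsub]
    have := intervalIntegral.norm_integral_le_of_norm_le_const
      (a := 0) (b := 1) (C := ω R) (f := fun s => F' (g s) - F' y) ?_
    · simpa using this
    · intro s hs
      have hsmem := hIoc s hs
      have hmem := hgmem s hsmem
      have h1 : ‖F' (g s) - F' y‖ ≤ ω ‖g s - y‖ :=
        hωF _ hmem _ (mem_closedBall_self hR.le)
      have h2 : ‖g s - y‖ ≤ R := by
        have := hmem; rwa [mem_closedBall, dist_eq_norm] at this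
      have h3 : ω ‖g s - y‖ ≤ ω R := by
        rcases eq_or_lt_of_le h2 with h | h
        · rw [h]
        · exact le_of_lt (hωmono ⟨norm_nonneg _, by linarith⟩ ⟨hR.le, by linarith⟩ h)
      linarith
  -- the perturbation t
  set E : H →L[ℝ] H := Q.comp A with hE
  set t : H →L[ℝ] H := 1 - E with ht
  have htnorm : ‖t‖ ≤ q := by
    have h1 : t = Q.comp (F' y - A) := by
      rw [ContinuousLinearMap.comp_sub, hQl, ht]
      rfl
    rw [h1]
    calc ‖Q.comp (F' y - A)‖ ≤ ‖Q‖ * ‖F' y - A‖ := ContinuousLinearMap.opNorm_comp_le _ _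
      _ ≤ m * ω R := by
          apply mul_le_mul hQm _ (norm_nonneg _) (by linarith)
          rwa [norm_sub_rev]
      _ = q := hq
  have htlt : ‖t‖ < 1 := lt_of_le_of_lt htnorm hq1
  set Uu := Units.oneSub t htlt with hU
  have hUval : (Uu : H →L[ℝ] H) = E := by
    simp [hU, Units.oneSub, ht]
  set B0 : H →L[ℝ] H := ↑Uu⁻¹ with hB0
  have hB0E : B0 * E = 1 := by rw [← hUval, hB0]; exact Uu.inv_mul
  have hEB0 : E * B0 = 1 := by rw [← hUval, hB0]; exact Uu.mul_inv
  have hB0norm : ‖B0‖ ≤ 1 / (1 - q) := by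
    have key : B0 = 1 + t * B0 := by
      have h1t : (1 - t) * B0 = 1 := by
        rw [ht, sub_sub_cancel]; exact hEB0
      calc B0 = 1 * B0 := by rw [one_mul]
        _ = ((1 - t) + t) * B0 := by rw [sub_add_cancel]
        _ = (1 - t) * B0 + t * B0 := by rw [add_mul]
        _ = 1 + t * B0 := by rw [h1t]
    have hn : ‖B0‖ ≤ 1 + q * ‖B0‖ := by
      calc ‖B0‖ = ‖(1 : H →L[ℝ] H) + t * B0‖ := by rw [← key]
        _ ≤ ‖(1 : H →L[ℝ] H)‖ + ‖t * B0‖ := norm_add_le _ _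
        _ ≤ 1 + ‖t‖ * ‖B0‖ :=
            add_le_add ContinuousLinearMap.norm_id_le (norm_mul_le _ _)
        _ ≤ 1 + q * ‖B0‖ :=
            add_le_add le_rfl (mul_le_mul_of_nonneg_right htnorm (norm_nonneg _))
    rw [le_div_iff₀ (by linarith)]
    nlinarith [norm_nonneg B0]
  refine ⟨B0.comp Q, ?_, ?_, ?_, ?_⟩
  · show B0.comp Q ∘L A = _
    have : B0.comp Q ∘L A = B0 * E := by
      rw [hE]; ext x; simp [ContinuousLinearMap.comp_apply]
    rw [this, hB0E]; rfl
  · have hAfac : A = (F' y).comp E := by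
      rw [hE, ← ContinuousLinearMap.comp_assoc, hQr]
      ext x; simp
    have : A ∘L (B0.comp Q) = (F' y).comp ((E * B0).comp Q) := by
      rw [hAfac]; ext x; simp [ContinuousLinearMap.comp_apply, ContinuousLinearMap.mul_apply]
    rw [this, hEB0]
    have : ((1 : H →L[ℝ] H)).comp Q = Q := by ext x; simp
    rw [this, hQr]
  · calc ‖B0.comp Q‖ ≤ ‖B0‖ * ‖Q‖ := ContinuousLinearMap.opNorm_comp_le _ _
      _ ≤ (1 / (1 - q)) * m := by
          have h1q : (0:ℝ) < 1 - q := by linarith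
          apply mul_le_mul hB0norm hQm (norm_nonneg _)
          positivity
      _ = m / (1 - q) := by ring
  · -- FTC
    have hderiv : ∀ s ∈ Icc (0:ℝ) 1, HasDerivAt (fun s => F (g s)) (F' (g s) (w - u)) s := by
      intro s hs
      have hgd : HasDerivAt g (w - u) s := by
        have h1 : HasDerivAt (fun s : ℝ => s • (w - u)) ((1:ℝ) • (w - u)) s :=
          (hasDerivAt_id s).smul_const (w - u)
        simpa [hg] using h1.const_add u
      have hFd : HasFDerivAt F (F' (g s)) (g s) := hdiff _ (hgmem s hs)
      exact hFd.comp_hasDerivAt s hgd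
    have hIntApp : IntervalIntegrable (fun s => F' (g s) (w - u)) MeasureTheory.volume 0 1 := by
      apply ContinuousOn.intervalIntegrable
      rw [uIcc_of_le zero_le_one]
      exact (ContinuousLinearMap.apply ℝ H (w - u)).continuous.comp_continuousOn hcontF'
    have hFTC : (∫ s in (0:ℝ)..1, F' (g s) (w - u)) = F (g 1) - F (g 0) :=
      intervalIntegral.integral_eq_sub_of_hasDerivAt
        (fun s hs => hderiv s (by rwa [uIcc_of_le zero_le_one] at hs)) hIntApp
    have hg0 : g 0 = u := by simp [hg]
    have hg1 : g 1 = w := by simp [hg]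
    rw [hA, ContinuousLinearMap.intervalIntegral_apply hInt (w - u)]
    rw [hFTC, hg0, hg1]
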